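/- For every infinite cardinal λ, every ordinal β < ε₀, and all positive integers m and d, there exists a cardinal κ > λ such that for every commutative semigroup (G,+) of cardinality κ and every coloring f : G → d, there exist a subset H ⊆ G of cardinality λ and an ω^β-large set B of positive integers with min(B) ≥ m such that FS^B(H) is monochromatic — assuming the Bigorajska–Kotlarski theorem that whenever an ω^β·(d+1)-large set is partitioned into d pieces, one piece is ω^β-large, together with the Erdős–Rado theorem. -/

import Mathlib

open Cardinal

universe u

/-- Sum of a nonempty tuple of elements of a commutative semigroup. -/
def tupSum {G : Type u} [AddCommSemigroup G] : {n : ℕ} → (Fin (n + 1) → G) → G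
  | 0, g => g 0
  | _ + 1, g => tupSum (fun i => g i.castSucc) + g (Fin.last _)

/-- `FSMono f A H i` : all sums of `j`-many pairwise distinct elements of `H`,
for `j ∈ A`, have color `i` under `f` (i.e. `FS^A(H)` is monochromatic of color `i`). -/
def FSMono {G : Type u} [AddCommSemigroup G] {c : ℕ} (f : G → Fin c)
    (A : Set ℕ) (H : Set G) (i : Fin c) : Prop :=
  ∀ m : ℕ, m + 1 ∈ A → ∀ g : Fin (m + 1) → G, Function.Injective g →
    (∀ j, g j ∈ H) → f (tupSum g) = i

/-- ε₀ : the least fixed point of x ↦ ω^x. -/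
noncomputable def eps0 : Ordinal.{0} := Ordinal.nfp (fun x => Ordinal.omega0 ^ x) 0

section AuxHindman
open Ordinal

section TupSum
variable {G : Type u} [AddCommSemigroup G]

lemma coe_tupSum : ∀ {n : ℕ} (g : Fin (n+1) → G),
    ((tupSum g : G) : WithZero G) = ∑ i, (g i : WithZero G)
  | 0, g => by simp [tupSum]
  | n+1, g => by
    rw [tupSum, WithZero.coe_add, coe_tupSum, Fin.sum_univ_castSucc (f := fun i => (g i : WithZero G))]

noncomputable def setSum (s : Finset G) : WithZero G := ∑ x ∈ s, (x : WithZero G)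

lemma setSum_image [DecidableEq G] {k : ℕ} (g : Fin (k+1) → G) (hg : Function.Injective g) :
    setSum (Finset.image g Finset.univ) = ↑(tupSum g) := by
  rw [setSum, Finset.sum_image (fun x _ y _ h => hg h), ← coe_tupSum]

end TupSum

def Homog {X : Type u} {P : Type u} (c : Finset X → P) (n : ℕ) (S : Set X) : Prop :=
  ∀ s t : Finset X, ↑s ⊆ S → ↑t ⊆ S → s.card = t.card → s.card ≤ n → c s = c t

def TClosed {X : Type u} [DecidableEq X] {P : Type u} (ν : Cardinal.{u}) (c : Finset X → P)
    (n : ℕ) (C : Set X) : Prop :=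
  ∀ S : Set X, S ⊆ C → #S ≤ ν → ∀ y : X, y ∉ S → ∃ z ∈ C, z ∉ S ∧
    ∀ u : Finset X, ↑u ⊆ S → u.card = n → c (insert z u) = c (insert y u)

lemma exists_bound_toType {κ : Cardinal.{u}} (hκ : κ.IsRegular) {ι : Type u}
    (f : ι → κ.ord.ToType) (hι : #ι < κ) : ∃ i, ∀ x, f x < i := by
  have hlim : Order.IsSuccLimit (κ.ord) := Cardinal.isSuccLimit_ord hκ.aleph0_le
  set e := Ordinal.ToType.mk (o := κ.ord) with he
  set o : Ordinal.{u} := ⨆ x, ((e.symm (f x)).1 + 1) with ho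
  have hoord : o < κ.ord := by
    apply Cardinal.iSup_lt_ord_of_isRegular hκ hι
    intro x
    exact hlim.succ_lt (e.symm (f x)).2
  refine ⟨e ⟨o, hoord⟩, fun x => ?_⟩
  have : e.symm (f x) < (⟨o, hoord⟩ : Set.Iio κ.ord) := by
    rw [← Subtype.coe_lt_coe]
    exact lt_of_lt_of_le (Order.lt_add_one_iff.mpr le_rfl) (Ordinal.le_iSup _ x)
  simpa using (OrderIso.lt_iff_lt e).mpr this

lemma mk_finset_le' (Y : Type u) : #(Finset Y) ≤ max #Y ℵ₀ := by
  rcases finite_or_infinite Y with h | h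
  · haveI := h; haveI := Fintype.ofFinite Y
    exact le_trans (lt_aleph0_of_finite (Finset Y)).le (le_max_right _ _)
  · haveI := h
    rw [mk_finset_of_infinite]; exact le_max_left _ _

section Step
variable {X : Type u} [DecidableEq X] {P : Type u} [Finite P]
  (c : Finset X → P) (n : ℕ) {ν : Cardinal.{u}}

/-- cardinality of the collection of `n`-subsets of a small set -/
lemma mk_nsubsets_le (hν : ℵ₀ ≤ ν) (S : Set X) (hS : #S ≤ ν) :
    #{u : Finset X // ↑u ⊆ S ∧ u.card = n} ≤ ν := by
  classical
  set φ : {u : Finset X // ↑u ⊆ S ∧ u.card = n} → Finset S :=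
    fun u => u.1.preimage (Subtype.val : S → X)
      (Set.injOn_of_injective Subtype.val_injective) with hφ
  have himg : ∀ u : {u : Finset X // ↑u ⊆ S ∧ u.card = n},
      Finset.image (Subtype.val : S → X) (φ u) = u.1 := by
    intro u
    rw [hφ, Finset.image_preimage]
    refine Finset.filter_true_of_mem fun x hx => ?_
    exact ⟨⟨x, u.2.1 hx⟩, rfl⟩
  have hinj : Function.Injective φ := by
    intro u v h
    apply Subtype.ext
    rw [← himg u, ← himg v, h]
  calc #{u : Finset X // ↑u ⊆ S ∧ u.card = n} ≤ #(Finset S) := mk_le_of_injective hinj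
    _ ≤ max #S ℵ₀ := mk_finset_le' _
    _ ≤ ν := max_le hS hν

lemma exists_realizer_set (hν : ℵ₀ ≤ ν) (S : Set X) (hS : #S ≤ ν) :
    ∃ R : Set X, #R ≤ 2 ^ ν ∧ ∀ y ∉ S, ∃ z ∈ R, z ∉ S ∧
      ∀ u : Finset X, ↑u ⊆ S → u.card = n → c (insert z u) = c (insert y u) := by
  classical
  set A := {u : Finset X // ↑u ⊆ S ∧ u.card = n} with hA
  set τ : {y : X // y ∉ S} → (A → P) := fun y u => c (insert y.1 u.1) with hτ
  refine ⟨Set.range (fun t : Set.range τ => (t.2.choose : {y : X // y ∉ S}).1), ?_, ?_⟩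
  · have hP : #P ≤ 2 ^ ν := (mk_le_aleph0).trans (hν.trans (cantor ν).le)
    calc #(Set.range (fun t : Set.range τ => (t.2.choose : {y : X // y ∉ S}).1))
        ≤ #(Set.range τ) := mk_range_le
      _ ≤ #(A → P) := mk_set_le _
      _ = #P ^ #A := (power_def _ _).symm
      _ ≤ (2 ^ ν) ^ ν := by
          refine le_trans (power_le_power_right hP) (power_le_power_left ?_ ?_)
          · exact power_ne_zero ν two_ne_zero
          · exact mk_nsubsets_le n hν S hS
      _ = 2 ^ (ν * ν) := by rw [← power_mul]
      _ = 2 ^ ν := by rw [mul_eq_self hν]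
  · intro y hy
    set t : Set.range τ := ⟨τ ⟨y, hy⟩, Set.mem_range_self _⟩ with ht
    refine ⟨(t.2.choose : {y : X // y ∉ S}).1, Set.mem_range_self t, t.2.choose.2, ?_⟩
    intro u hu hcard
    exact congrFun t.2.choose_spec (⟨u, hu, hcard⟩ : A)
end Step

section Closure
variable {X : Type u} [DecidableEq X] {P : Type u} [Finite P]

noncomputable def iterFam (F : Set X → Set X) {ι : Type u} [LinearOrder ι]
    [WellFoundedLT ι] : ι → Set X :=
  WellFounded.fix wellFounded_lt (fun i ih => F (⋃ j : Set.Iio i, ih j.1 j.2))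

omit [DecidableEq X] in
lemma iterFam_eq (F : Set X → Set X) {ι : Type u} [LinearOrder ι] [WellFoundedLT ι] (i : ι) :
    iterFam F i = F (⋃ j : Set.Iio i, iterFam F j.1) :=
  WellFounded.fix_eq _ _ i

lemma exists_tclosed (c : Finset X → P) (n : ℕ) {ν : Cardinal.{u}} (hν : ℵ₀ ≤ ν) :
    ∃ C : Set X, #C ≤ 2 ^ ν ∧ TClosed ν c n C := by
  classical
  have h2 : ℵ₀ ≤ 2 ^ ν := hν.trans (cantor ν).le
  have hstep' : ∀ S : Set X, ∃ R : Set X, #R ≤ 2 ^ ν ∧ (#S ≤ ν → ∀ y ∉ S, ∃ z ∈ R, z ∉ S ∧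
      ∀ u : Finset X, ↑u ⊆ S → u.card = n → c (insert z u) = c (insert y u)) := by
    intro S
    by_cases h : #S ≤ ν
    · obtain ⟨R, h1, hR⟩ := exists_realizer_set c n hν S h
      exact ⟨R, h1, fun _ => hR⟩
    · exact ⟨∅, by simp, fun h' => absurd h' h⟩
  choose Rfun hRcard hRreal using hstep'
  let F : Set X → Set X := fun B => B ∪ ⋃ (S : {S : Set X // S ⊆ B ∧ #S ≤ ν}), Rfun S.1
  have hFsub : ∀ B, B ⊆ F B := fun B => Set.subset_union_left
  have hFcard : ∀ B : Set X, #B ≤ 2 ^ ν → #(F B) ≤ 2 ^ ν := by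
    intro B hB
    have hidx : #{S : Set X // S ⊆ B ∧ #S ≤ ν} ≤ 2 ^ ν := by
      calc #{S : Set X // S ⊆ B ∧ #S ≤ ν} ≤ max #B ℵ₀ ^ ν := mk_bounded_subset_le B ν
        _ ≤ (2 ^ ν) ^ ν := power_le_power_right (max_le hB h2)
        _ = 2 ^ (ν * ν) := by rw [← power_mul]
        _ = 2 ^ ν := by rw [mul_eq_self hν]
    calc #(F B) ≤ #B + #(⋃ (S : {S : Set X // S ⊆ B ∧ #S ≤ ν}), Rfun S.1) :=
          Cardinal.mk_union_le _ _
      _ ≤ #B + #{S : Set X // S ⊆ B ∧ #S ≤ ν} * (2 ^ ν) := by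
          refine add_le_add_right (le_trans (mk_iUnion_le _) ?_) _
          exact mul_le_mul_right (ciSup_le' fun (S : {S : Set X // S ⊆ B ∧ #S ≤ ν}) => hRcard S.1) _
      _ ≤ 2 ^ ν + 2 ^ ν * 2 ^ ν := add_le_add hB (mul_le_mul_left hidx _)
      _ = 2 ^ ν := by rw [mul_eq_self h2, add_eq_self h2]
  have hκreg : (Order.succ ν).IsRegular := isRegular_succ hν
  let ι := (Order.succ ν).ord.ToType
  let AFam : ι → Set X := iterFam F
  have hAeq : ∀ i : ι, AFam i = F (⋃ j : Set.Iio i, AFam j.1) := fun i => iterFam_eq F i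
  have hAcard : ∀ i : ι, #(AFam i) ≤ 2 ^ ν := by
    intro i
    refine wellFounded_lt.induction (C := fun i : ι => #(AFam i) ≤ 2 ^ ν) i ?_
    intro i ih
    · rw [hAeq i]
      apply hFcard
      have hIio : #(Set.Iio i) ≤ 2 ^ ν :=
        (Order.lt_succ_iff.mp (Cardinal.mk_Iio_ord_toType i)).trans ((cantor ν).le)
      calc #(⋃ j : Set.Iio i, AFam j.1) ≤ #(Set.Iio i) * ⨆ j : Set.Iio i, #(AFam j.1) :=
            mk_iUnion_le _
        _ ≤ 2 ^ ν * 2 ^ ν := mul_le_mul' hIio (ciSup_le' fun j => ih j.1 j.2)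
        _ = 2 ^ ν := mul_eq_self h2
  refine ⟨⋃ i, AFam i, ?_, ?_⟩
  · have hικ : #ι ≤ 2 ^ ν := by
      have : #ι = Order.succ ν := by
        rw [mk_toType, card_ord]
      rw [this]
      exact Order.succ_le_iff.mpr (cantor ν)
    calc #(⋃ i, AFam i) ≤ #ι * ⨆ i, #(AFam i) := mk_iUnion_le _
      _ ≤ 2 ^ ν * 2 ^ ν := mul_le_mul' hικ (ciSup_le' hAcard)
      _ = 2 ^ ν := mul_eq_self h2
  · intro S hSC hSν y hy
    have hchoice : ∀ x : S, ∃ i : ι, (x : X) ∈ AFam i := by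
      intro x
      have := hSC x.2
      rwa [Set.mem_iUnion] at this
    choose g hg using hchoice
    have hSsmall : #S < Order.succ ν := lt_of_le_of_lt hSν (Order.lt_succ ν)
    obtain ⟨i, hi⟩ := exists_bound_toType hκreg g hSsmall
    have hSU : S ⊆ ⋃ j : Set.Iio i, AFam j.1 := by
      intro x hx
      rw [Set.mem_iUnion]
      exact ⟨⟨g ⟨x, hx⟩, hi ⟨x, hx⟩⟩, hg ⟨x, hx⟩⟩
    obtain ⟨z, hzR, hzS, hztype⟩ := hRreal S hSν y hy
    refine ⟨z, ?_, hzS, hztype⟩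
    rw [Set.mem_iUnion]
    refine ⟨i, ?_⟩
    rw [hAeq i]
    right
    rw [Set.mem_iUnion]
    exact ⟨⟨S, hSU, hSν⟩, hzR⟩
end Closure

section Seq
variable {X : Type u} [DecidableEq X] {P : Type u} [Finite P]

lemma exists_end_homog_seq (c : Finset X → P) (n : ℕ) {ν : Cardinal.{u}}
    {C : Set X} (hC : TClosed ν c n C) (a : X) (ha : a ∉ C) :
    ∃ x : ν.ord.ToType → X, Function.Injective x ∧
      ∀ α, ∀ u : Finset X, ↑u ⊆ x '' (Set.Iio α) → u.card = n →
        c (insert (x α) u) = c (insert a u) := by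
  classical
  have key : ∀ (α : ν.ord.ToType) (prev : ∀ β, β < α → X), ∃ z : X, z ∈ C ∧
      z ∉ {w | w ∈ C ∧ ∃ β, ∃ h : β < α, prev β h = w} ∧
      ∀ u : Finset X, ↑u ⊆ {w | w ∈ C ∧ ∃ β, ∃ h : β < α, prev β h = w} → u.card = n →
        c (insert z u) = c (insert a u) := by
    intro α prev
    set S : Set X := {w | w ∈ C ∧ ∃ β, ∃ h : β < α, prev β h = w} with hS
    have hSC : S ⊆ C := fun w hw => hw.1
    have hScard : #S ≤ ν := by
      have hsub : S ⊆ Set.range (fun β : Set.Iio α => prev β.1 β.2) := by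
        rintro w ⟨-, β, h, rfl⟩
        exact ⟨⟨β, h⟩, rfl⟩
      calc #S ≤ #(Set.range (fun β : Set.Iio α => prev β.1 β.2)) := mk_le_mk_of_subset hsub
        _ ≤ #(Set.Iio α) := mk_range_le
        _ ≤ ν := (Cardinal.mk_Iio_ord_toType α).le
    have haS : a ∉ S := fun h => ha h.1
    obtain ⟨z, hzC, hzS, hztype⟩ := hC S hSC hScard a haS
    exact ⟨z, hzC, hzS, hztype⟩
  set x : ν.ord.ToType → X :=
    WellFounded.fix wellFounded_lt (fun α ih => (key α ih).choose) with hxdef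
  have hx : ∀ α, x α = (key α (fun β _ => x β)).choose := by
    intro α
    rw [hxdef]
    exact WellFounded.fix_eq _ _ α
  have hxC : ∀ α, x α ∈ C := by
    intro α
    rw [hx α]
    exact (key α _).choose_spec.1
  have hSeq : ∀ α : ν.ord.ToType,
      {w | w ∈ C ∧ ∃ β, ∃ h : β < α, x β = w} = x '' Set.Iio α := by
    intro α
    ext w
    constructor
    · rintro ⟨-, β, h, rfl⟩
      exact ⟨β, h, rfl⟩
    · rintro ⟨β, h, rfl⟩
      exact ⟨hxC β, β, h, rfl⟩
  have hnotmem : ∀ α, x α ∉ x '' Set.Iio α := by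
    intro α
    rw [← hSeq α]
    have := (key α (fun β _ => x β)).choose_spec.2.1
    rwa [← hx α] at this
  refine ⟨x, ?_, ?_⟩
  · intro β γ h
    rcases lt_trichotomy β γ with hlt | heq | hgt
    · exact absurd (⟨β, hlt, h⟩ : x γ ∈ x '' Set.Iio γ) (hnotmem γ)
    · exact heq
    · exact absurd (⟨γ, hgt, h.symm⟩ : x β ∈ x '' Set.Iio β) (hnotmem β)
  · intro α u hu hcard
    have := (key α (fun β _ => x β)).choose_spec.2.2 u (by rwa [hSeq α]) hcard
    rwa [← hx α] at this
end Seq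

theorem erdosRado : ∀ (n : ℕ) (l : Cardinal.{u}), ℵ₀ ≤ l →
    ∃ κ : Cardinal.{u}, l < κ ∧ ∀ (X : Type u), κ ≤ #X → ∀ (P : Type u), Finite P →
      ∀ c : Finset X → P, ∃ S : Set X, #S = l ∧ Homog c n S := by
  intro n
  induction n with
  | zero =>
    intro l hl
    refine ⟨Order.succ l, Order.lt_succ l, ?_⟩
    intro X hX P _ c
    obtain ⟨S, hS⟩ := le_mk_iff_exists_set.mp ((Order.le_succ l).trans hX)
    refine ⟨S, hS, ?_⟩
    intro s t hs ht hcard hle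
    have hs0 : s = ∅ := Finset.card_eq_zero.mp (Nat.le_zero.mp hle)
    have ht0 : t = ∅ := Finset.card_eq_zero.mp (by omega)
    rw [hs0, ht0]
  | succ n IH =>
    intro l hl
    obtain ⟨ν, hlν, hν⟩ := IH l hl
    have hνinf : ℵ₀ ≤ ν := hl.trans hlν.le
    refine ⟨Order.succ (2 ^ ν), (hlν.trans (cantor ν)).trans (Order.lt_succ _), ?_⟩
    intro X hX P hP c
    classical
    obtain ⟨C, hCcard, hCclosed⟩ := exists_tclosed c n hνinf
    have hex : ∃ a : X, a ∉ C := by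
      by_contra h
      push_neg at h
      have h1 : C = Set.univ := Set.eq_univ_of_forall h
      have h2 : #C = #X := by rw [h1, mk_univ]
      have h3 : #X ≤ 2 ^ ν := h2 ▸ hCcard
      exact absurd (hX.trans h3) (by simp [Order.succ_le_iff])
    obtain ⟨a, ha⟩ := hex
    obtain ⟨x, hxinj, hxend⟩ := exists_end_homog_seq c n hCclosed a ha
    set E : Set X := Set.range x with hEdef
    have hE : #E = ν := by rw [hEdef, mk_range_eq _ hxinj, mk_toType, card_ord]
    set emb : ↥E ↪ X := Function.Embedding.subtype _ with hembdef
    set cc : Finset ↥E → P × P := fun t => (c (t.map emb), c (insert a (t.map emb))) with hccdef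
    obtain ⟨S', hS'card, hS'hom⟩ := hν ↥E (le_of_eq hE.symm) (P × P) inferInstance cc
    set S : Set X := Subtype.val '' S' with hSdef
    have hScard : #S = l := by
      rw [hSdef, mk_image_eq Subtype.val_injective]; exact hS'card
    refine ⟨S, hScard, ?_⟩
    have hSE : S ⊆ E := by rintro w ⟨w', _, rfl⟩; exact w'.2
    have lift : ∀ s : Finset X, ↑s ⊆ S → ∃ s' : Finset ↥E, ↑s' ⊆ S' ∧ s'.map emb = s := by
      intro s hs
      refine ⟨s.attach.map ⟨fun z => (⟨z.1, hSE (hs z.2)⟩ : ↥E),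
        fun z w h => Subtype.ext (by simpa using congrArg Subtype.val h)⟩, ?_, ?_⟩
      · intro e he
        rw [Finset.mem_coe, Finset.mem_map] at he
        obtain ⟨z, -, rfl⟩ := he
        have hzS : (z : X) ∈ S := hs z.2
        obtain ⟨w', hw'S, hw'⟩ := hzS
        have hzw : w' = ⟨(z : X), hSE (hs z.2)⟩ := Subtype.ext hw'
        exact Set.mem_of_eq_of_mem hzw.symm hw'S
      · apply Finset.ext
        intro w
        constructor
        · intro hw
          obtain ⟨z, hz, rfl⟩ := Finset.mem_map.mp hw
          obtain ⟨y, -, rfl⟩ := Finset.mem_map.mp hz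
          exact y.2
        · intro hw
          refine Finset.mem_map.mpr ⟨⟨w, hSE (hs hw)⟩, ?_, rfl⟩
          exact Finset.mem_map.mpr ⟨⟨w, hw⟩, Finset.mem_attach _ _, rfl⟩
    intro s t hs ht hcard hle
    rcases Nat.lt_or_ge s.card (n+1) with hlt | hge
    · obtain ⟨s', hs'S, hs'map⟩ := lift s hs
      obtain ⟨t', ht'S, ht'map⟩ := lift t ht
      have hcs : s'.card = s.card := by rw [← hs'map, Finset.card_map]
      have hct : t'.card = t.card := by rw [← ht'map, Finset.card_map]
      have h1 : cc s' = cc t' :=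
        hS'hom s' t' hs'S ht'S (by rw [hcs, hct, hcard]) (by rw [hcs]; omega)
      have h2 := congrArg Prod.fst h1
      rw [hccdef] at h2
      simp only [hs'map, ht'map] at h2
      exact h2
    · have hscard : s.card = n+1 := le_antisymm hle hge
      have htcard : t.card = n+1 := by omega
      have main : ∀ s : Finset X, ↑s ⊆ S → s.card = n+1 → ∃ s₀' : Finset ↥E,
          ↑s₀' ⊆ S' ∧ s₀'.card = n ∧ c s = c (insert a (s₀'.map emb)) := by
        intro s hs hscard
        have hsE : ∀ w ∈ s, w ∈ Set.range x := fun w hw => hSE (hs hw)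
        set u : Finset (ν.ord.ToType) := s.preimage x (Set.injOn_of_injective hxinj) with hu
        have himg : u.image x = s := by
          rw [hu, Finset.image_preimage]
          exact Finset.filter_true_of_mem hsE
        have hucard : u.card = n+1 := by
          rw [← Finset.card_image_of_injective u hxinj, himg, hscard]
        have hune : u.Nonempty := Finset.card_pos.mp (by omega)
        set γ := u.max' hune with hγ
        have hγs : x γ ∈ s := by
          rw [← himg]
          exact Finset.mem_image.mpr ⟨γ, u.max'_mem hune, rfl⟩
        set s₀ := s.erase (x γ) with hs₀
        have hs₀card : s₀.card = n := by
          rw [hs₀, Finset.card_erase_of_mem hγs, hscard]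
          omega
        have hs₀sub : ↑s₀ ⊆ x '' Set.Iio γ := by
          intro w hw
          have hws : w ∈ s := Finset.mem_of_mem_erase hw
          have : w ∈ u.image x := by rw [himg]; exact hws
          obtain ⟨β, hβu, hβw⟩ := Finset.mem_image.mp this
          have hne : β ≠ γ := by
            intro h
            exact (Finset.ne_of_mem_erase hw) (by rw [← hβw, h])
          exact ⟨β, lt_of_le_of_ne (u.le_max' β hβu) hne, hβw⟩
        have heq : insert (x γ) s₀ = s := Finset.insert_erase hγs
        have h1 : c s = c (insert a s₀) := by
          conv_lhs => rw [← heq]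
          exact hxend γ s₀ hs₀sub hs₀card
        obtain ⟨s₀', h1', h2'⟩ := lift s₀ (fun w hw => hs (Finset.mem_of_mem_erase hw))
        refine ⟨s₀', h1', ?_, ?_⟩
        · rw [← hs₀card, ← h2', Finset.card_map]
        · rw [h1, h2']
      obtain ⟨s₀', hs₀'S, hs₀'card, hs₀'eq⟩ := main s hs hscard
      obtain ⟨t₀', ht₀'S, ht₀'card, ht₀'eq⟩ := main t ht htcard
      have h1 : cc s₀' = cc t₀' :=
        hS'hom s₀' t₀' hs₀'S ht₀'S (by rw [hs₀'card, ht₀'card]) (by omega)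
      have h2 := congrArg Prod.snd h1
      rw [hccdef] at h2
      rw [hs₀'eq, ht₀'eq]
      exact h2

end AuxHindman

/-- Hindman-type theorem with ω^β-large exponent set, conditional on the
Bigorajska–Kotlarski partition theorem for α-large sets of positive integers
(stated for an abstract largeness predicate `IsLarge`, together with the basic
fact that α-large sets with arbitrarily large minimum exist). -/
theorem stmt13 (IsLarge : Ordinal.{0} → Finset ℕ → Prop)
    (hBK : ∀ β : Ordinal.{0}, β < eps0 → ∀ d : ℕ, 0 < d →
      ∀ (B : Finset ℕ) (p : ℕ → Fin d),
        IsLarge (Ordinal.omega0 ^ β * (d + 1 : ℕ)) B →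
          ∃ j : Fin d, IsLarge (Ordinal.omega0 ^ β) (B.filter fun k => p k = j))
    (hEx : ∀ (α : Ordinal.{0}) (m : ℕ),
      ∃ B : Finset ℕ, IsLarge α B ∧ ∀ k ∈ B, m ≤ k ∧ 0 < k)
    (l : Cardinal.{u}) (hl : ℵ₀ ≤ l) (β : Ordinal.{0}) (hβ : β < eps0)
    (m d : ℕ) (hm : 0 < m) (hd : 0 < d) :
    ∃ κ : Cardinal.{u}, l < κ ∧
      ∀ (G : Type u) [AddCommSemigroup G], #G = κ → ∀ f : G → Fin d,
        ∃ H : Set G, #H = l ∧ ∃ B : Finset ℕ,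
          IsLarge (Ordinal.omega0 ^ β) B ∧ (∀ k ∈ B, m ≤ k ∧ 0 < k) ∧
          ∃ i : Fin d, FSMono f ↑B H i := by
  classical
  obtain ⟨B₀, hB₀large, hB₀mem⟩ := hEx (Ordinal.omega0 ^ β * (d + 1 : ℕ)) m
  set N := B₀.sup id with hN
  obtain ⟨κ, hlκ, hκ⟩ := erdosRado N l hl
  refine ⟨κ, hlκ, ?_⟩
  intro G _ hG f
  let c : Finset G → ULift.{u} (Fin d) := fun s =>
    if h : ∃ x : G, setSum s = ↑x then ⟨f h.choose⟩ else ⟨⟨0, hd⟩⟩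
  have hc : ∀ (k : ℕ) (g' : Fin (k+1) → G), Function.Injective g' →
      c (Finset.image g' Finset.univ) = ⟨f (tupSum g')⟩ := by
    intro k g' hg'
    have hsum : setSum (Finset.image g' Finset.univ) = ↑(tupSum g') := setSum_image g' hg'
    have hex : ∃ x : G, setSum (Finset.image g' Finset.univ) = ↑x := ⟨_, hsum⟩
    show (if h : ∃ x : G, setSum (Finset.image g' Finset.univ) = ↑x then
        (⟨f h.choose⟩ : ULift.{u} (Fin d)) else ⟨⟨0, hd⟩⟩) = ⟨f (tupSum g')⟩
    rw [dif_pos hex]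
    have hch : (hex.choose : G) = tupSum g' := by
      have h1 := hex.choose_spec
      exact (WithZero.coe_inj.mp (hsum.symm.trans h1)).symm
    rw [hch]
  obtain ⟨S, hScard, hhom⟩ := hκ G hG.ge (ULift.{u} (Fin d)) inferInstance c
  have hSinf : S.Infinite := by
    rw [← Set.infinite_coe_iff]
    exact aleph0_le_mk_iff.mp (hScard.symm ▸ hl)
  choose ref href hrefcard using hSinf.exists_subset_card_eq
  let p : ℕ → Fin d := fun k => (c (ref k)).down
  obtain ⟨j, hj⟩ := hBK β hβ d hd B₀ p hB₀large
  refine ⟨S, hScard, B₀.filter (fun k => p k = j), hj, ?_, j, ?_⟩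
  · intro k hk
    exact hB₀mem k (Finset.mem_filter.mp hk).1
  · intro m' hm' g hginj hgS
    rw [Finset.mem_coe] at hm'
    have hpj : p (m' + 1) = j := (Finset.mem_filter.mp hm').2
    have hm'B₀ : m' + 1 ∈ B₀ := (Finset.mem_filter.mp hm').1
    have hleN : m' + 1 ≤ N := Finset.le_sup (f := id) hm'B₀
    have hcards : (Finset.image g Finset.univ).card = m' + 1 := by
      rw [Finset.card_image_of_injective _ hginj, Finset.card_univ, Fintype.card_fin]
    have hsS : ↑(Finset.image g Finset.univ) ⊆ S := by
      intro w hw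
      rw [Finset.mem_coe, Finset.mem_image] at hw
      obtain ⟨i, -, rfl⟩ := hw
      exact hgS i
    have h1 : c (Finset.image g Finset.univ) = c (ref (m' + 1)) :=
      hhom _ _ hsS (href _) (by rw [hcards, hrefcard]) (by rw [hcards]; exact hleN)
    have h2 := hc m' g hginj
    have h3 : (⟨f (tupSum g)⟩ : ULift.{u} (Fin d)) = ⟨p (m' + 1)⟩ := by
      rw [← h2, h1]
    have h4 := congrArg ULift.down h3
    rw [show f (tupSum g) = (⟨f (tupSum g)⟩ : ULift.{u} (Fin d)).down from rfl, h3, hpj]
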